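/- If X and Y are independent random variables and Z is jointly distributed with (X,Y), then for any random variable Q with (X,Z) - Q - (Y,Z) a Markov chain, I(X,Z;Q|Y,Z) + I(Y,Z;Q|X,Z) ≥ I(X,Y;Q) - 2. -/

import Mathlib

namespace Paper

open Classical in
/-- Probability of an event under a pmf `μ` on a finite sample space. -/
noncomputable def pe {Ω : Type*} [Fintype Ω] (μ : Ω → ℝ) (E : Ω → Prop) : ℝ :=
  ∑ ω, if E ω then μ ω else 0

/-- Probability that random variable `X` takes value `a`. -/
noncomputable def prob {Ω α : Type*} [Fintype Ω] (μ : Ω → ℝ) (X : Ω → α) (a : α) : ℝ :=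
  pe μ (fun ω => X ω = a)

/-- `μ` is a probability mass function. -/
def IsPMF {Ω : Type*} [Fintype Ω] (μ : Ω → ℝ) : Prop :=
  (∀ ω, 0 ≤ μ ω) ∧ ∑ ω, μ ω = 1

open Classical in
/-- Shannon entropy (in bits) of the random variable `X` under `μ`. -/
noncomputable def H {Ω α : Type*} [Fintype Ω] (μ : Ω → ℝ) (X : Ω → α) : ℝ :=
  -∑ a ∈ Finset.univ.image X, prob μ X a * Real.logb 2 (prob μ X a)

/-- Mutual information `I(X;Y)` in bits. -/
noncomputable def mutInfo {Ω α β : Type*} [Fintype Ω] (μ : Ω → ℝ)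
    (X : Ω → α) (Y : Ω → β) : ℝ :=
  H μ X + H μ Y - H μ (fun ω => (X ω, Y ω))

/-- Conditional entropy `H(X|Y)` in bits. -/
noncomputable def condEnt {Ω α β : Type*} [Fintype Ω] (μ : Ω → ℝ)
    (X : Ω → α) (Y : Ω → β) : ℝ :=
  H μ (fun ω => (X ω, Y ω)) - H μ Y

/-- Conditional mutual information `I(X;Y|Z)` in bits. -/
noncomputable def condMutInfo {Ω α β γ : Type*} [Fintype Ω] (μ : Ω → ℝ)
    (X : Ω → α) (Y : Ω → β) (Z : Ω → γ) : ℝ :=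
  H μ (fun ω => (X ω, Z ω)) + H μ (fun ω => (Y ω, Z ω))
    - H μ (fun ω => (X ω, Y ω, Z ω)) - H μ Z

end Paper
namespace Paper
open Finset Real Classical
attribute [local instance 2000] Classical.propDecidable

variable {Ω : Type*} [Fintype Ω] {μ : Ω → ℝ}

lemma pe_congr {E F : Ω → Prop} (h : ∀ ω, E ω ↔ F ω) : pe μ E = pe μ F :=
  Finset.sum_congr rfl fun ω _ => if_congr (h ω) rfl rfl

lemma pe_nonneg (hμ : ∀ ω, 0 ≤ μ ω) (E : Ω → Prop) : 0 ≤ pe μ E := by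
  refine Finset.sum_nonneg fun ω _ => ?_
  split
  · exact hμ ω
  · exact le_rfl

lemma pe_mono (hμ : ∀ ω, 0 ≤ μ ω) {E F : Ω → Prop} (h : ∀ ω, E ω → F ω) :
    pe μ E ≤ pe μ F := by
  refine Finset.sum_le_sum fun ω _ => ?_
  by_cases hE : E ω
  · rw [if_pos hE, if_pos (h ω hE)]
  · rw [if_neg hE]; split
    · exact hμ ω
    · exact le_rfl

lemma prob_nonneg (hμ : ∀ ω, 0 ≤ μ ω) {α : Type*} (X : Ω → α) (a : α) :
    0 ≤ prob μ X a := pe_nonneg hμ _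

lemma le_prob (hμ : ∀ ω, 0 ≤ μ ω) {α : Type*} (X : Ω → α) (ω₀ : Ω) :
    μ ω₀ ≤ prob μ X (X ω₀) := by
  unfold prob pe
  have h0 : ∀ ω ∈ (Finset.univ : Finset Ω), 0 ≤ if X ω = X ω₀ then μ ω else 0 := by
    intro ω _
    split
    · exact hμ ω
    · exact le_rfl
  have := Finset.single_le_sum h0 (Finset.mem_univ ω₀)
  simpa using this

lemma sum_mul_comp {α : Type*} (X : Ω → α) (g : α → ℝ) :
    ∑ ω, μ ω * g (X ω) = ∑ a ∈ Finset.univ.image X, prob μ X a * g a := by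
  unfold prob pe
  have : ∀ a, (∑ ω, if X ω = a then μ ω else 0) * g a
      = ∑ ω, if X ω = a then μ ω * g a else 0 := by
    intro a
    rw [Finset.sum_mul]
    exact Finset.sum_congr rfl fun ω _ => by split <;> simp
  simp only [this]
  rw [Finset.sum_comm]
  refine Finset.sum_congr rfl fun ω _ => ?_
  rw [Finset.sum_ite_eq (Finset.univ.image X) (X ω) (fun a => μ ω * g a)]
  rw [if_pos (Finset.mem_image_of_mem X (Finset.mem_univ ω))]

lemma sum_prob_eq_one (hμ1 : ∑ ω, μ ω = 1) {α : Type*} (X : Ω → α) :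
    ∑ a ∈ Finset.univ.image X, prob μ X a = 1 := by
  have := sum_mul_comp (μ := μ) X (fun _ => (1:ℝ))
  simpa [hμ1] using this.symm

lemma H_pointwise {α : Type*} (X : Ω → α) :
    H μ X = -∑ ω, μ ω * Real.logb 2 (prob μ X (X ω)) := by
  unfold H
  rw [sum_mul_comp X (fun a => Real.logb 2 (prob μ X a))]

lemma prob_comp_eq {α β : Type*} {X : Ω → α} {Y : Ω → β}
    (h : ∀ ω ω', X ω = X ω' ↔ Y ω = Y ω') (ω₀ : Ω) :
    prob μ X (X ω₀) = prob μ Y (Y ω₀) :=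
  pe_congr fun ω => h ω ω₀

lemma H_congr {α β : Type*} {X : Ω → α} {Y : Ω → β}
    (h : ∀ ω ω', X ω = X ω' ↔ Y ω = Y ω') : H μ X = H μ Y := by
  rw [H_pointwise, H_pointwise]
  congr 1
  exact Finset.sum_congr rfl fun ω _ => by rw [prob_comp_eq h ω]

end Paper
namespace Paper
open Finset Real Classical
attribute [local instance 2000] Classical.propDecidable

lemma gibbs {ι : Type*} (s : Finset ι) (p q : ι → ℝ)
    (hp : ∀ i ∈ s, 0 ≤ p i) (hq : ∀ i ∈ s, 0 ≤ q i)
    (hpq : ∀ i ∈ s, 0 < p i → 0 < q i)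
    (hp1 : ∑ i ∈ s, p i = 1) (hq1 : ∑ i ∈ s, q i ≤ 1) :
    ∑ i ∈ s, p i * Real.logb 2 (q i / p i) ≤ 0 := by
  classical
  set t := s.filter (fun i => 0 < p i) with ht
  have hts : t ⊆ s := Finset.filter_subset _ _
  have hsum_t : ∀ f : ι → ℝ, (∀ i ∈ s, p i = 0 → p i * f i = 0) →
      ∑ i ∈ s, p i * f i = ∑ i ∈ t, p i * f i := by
    intro f hf
    rw [ht, Finset.sum_filter_of_ne]
    intro i hi hne
    rcases lt_or_eq_of_le (hp i hi) with h | h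
    · exact h
    · exact absurd (hf i hi h.symm) hne
  have hpt1 : ∑ i ∈ t, p i = 1 := by
    rw [← hp1, ht, Finset.sum_filter_of_ne]
    intro i hi hne
    exact (hp i hi).lt_of_ne (Ne.symm hne)
  rw [hsum_t _ (fun i hi h0 => by rw [h0, zero_mul])]
  have hlog : ∑ i ∈ t, p i * Real.log (q i / p i) ≤ 0 := by
    have hmem : ∀ i ∈ t, q i / p i ∈ Set.Ioi (0:ℝ) := by
      intro i hi
      have hpi : 0 < p i := (Finset.mem_filter.mp hi).2
      have hqi : 0 < q i := hpq i (hts hi) hpi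
      exact Set.mem_Ioi.mpr (div_pos hqi hpi)
    have hjen := (strictConcaveOn_log_Ioi.concaveOn).le_map_sum
      (fun i hi => hp i (hts hi)) hpt1 hmem
    have hsum_q : ∑ i ∈ t, p i • (q i / p i) = ∑ i ∈ t, q i := by
      refine Finset.sum_congr rfl fun i hi => ?_
      have hpi : 0 < p i := (Finset.mem_filter.mp hi).2
      rw [smul_eq_mul]; field_simp
    have hqt : ∑ i ∈ t, q i ≤ 1 :=
      le_trans (Finset.sum_le_sum_of_subset_of_nonneg hts (fun i hi _ => hq i hi)) hq1
    have hqt0 : (0:ℝ) ≤ ∑ i ∈ t, q i := Finset.sum_nonneg fun i hi => hq i (hts hi)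
    calc ∑ i ∈ t, p i * Real.log (q i / p i) ≤ Real.log (∑ i ∈ t, q i) := by
          rw [← hsum_q]; simpa using hjen
      _ ≤ 0 := Real.log_nonpos hqt0 hqt
  have hconv : ∑ i ∈ t, p i * Real.logb 2 (q i / p i)
      = (∑ i ∈ t, p i * Real.log (q i / p i)) / Real.log 2 := by
    rw [Finset.sum_div]
    exact Finset.sum_congr rfl fun i _ => by rw [Real.logb, mul_div_assoc]
  rw [hconv]
  exact div_nonpos_of_nonpos_of_nonneg hlog (Real.log_nonneg one_le_two)

end Paper
namespace Paper
open Finset Real Classical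
attribute [local instance 2000] Classical.propDecidable

variable {Ω : Type*} [Fintype Ω] {μ : Ω → ℝ}

lemma prob_fst_marginal {α γ : Type*} (X : Ω → α) (W : Ω → γ) (w : γ) :
    ∑ a ∈ Finset.univ.image X, prob μ (fun ω => (X ω, W ω)) (a, w) = prob μ W w := by
  unfold prob pe
  rw [Finset.sum_comm]
  refine Finset.sum_congr rfl fun ω _ => ?_
  by_cases hw : W ω = w
  · rw [if_pos hw]
    have hcond : ∀ a : α, ((X ω, W ω) = (a, w)) = (X ω = a) :=
      fun a => propext (by simp [Prod.ext_iff, hw])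
    simp only [hcond]
    rw [Finset.sum_ite_eq (Finset.univ.image X) (X ω) (fun _ => μ ω),
      if_pos (Finset.mem_image_of_mem X (Finset.mem_univ ω))]
  · rw [if_neg hw]
    refine Finset.sum_eq_zero fun a _ => ?_
    exact if_neg (fun h => hw (congrArg Prod.snd h))

lemma prob_pair_le_fst {α β : Type*} (hμ0 : ∀ ω, 0 ≤ μ ω) (X : Ω → α) (Y : Ω → β)
    (t : α × β) : prob μ (fun ω => (X ω, Y ω)) t ≤ prob μ X t.1 :=
  pe_mono hμ0 (fun ω h => by rw [← h])

lemma prob_pair_le_snd {α β : Type*} (hμ0 : ∀ ω, 0 ≤ μ ω) (X : Ω → α) (Y : Ω → β)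
    (t : α × β) : prob μ (fun ω => (X ω, Y ω)) t ≤ prob μ Y t.2 :=
  pe_mono hμ0 (fun ω h => by rw [← h])

lemma mutInfo_nonneg {α β : Type*} (hμ : IsPMF μ) (X : Ω → α) (Y : Ω → β) :
    0 ≤ mutInfo μ X Y := by
  obtain ⟨hμ0, hμ1⟩ := hμ
  have hHX : H μ X = -∑ t ∈ Finset.univ.image (fun ω => (X ω, Y ω)),
      prob μ (fun ω => (X ω, Y ω)) t * Real.logb 2 (prob μ X t.1) := by
    rw [H_pointwise X]
    congr 1
    simpa using sum_mul_comp (μ := μ) (fun ω => (X ω, Y ω))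
      (fun t => Real.logb 2 (prob μ X t.1))
  have hHY : H μ Y = -∑ t ∈ Finset.univ.image (fun ω => (X ω, Y ω)),
      prob μ (fun ω => (X ω, Y ω)) t * Real.logb 2 (prob μ Y t.2) := by
    rw [H_pointwise Y]
    congr 1
    simpa using sum_mul_comp (μ := μ) (fun ω => (X ω, Y ω))
      (fun t => Real.logb 2 (prob μ Y t.2))
  have key : ∑ t ∈ Finset.univ.image (fun ω => (X ω, Y ω)),
      prob μ (fun ω => (X ω, Y ω)) t *
        Real.logb 2 ((prob μ X t.1 * prob μ Y t.2) / prob μ (fun ω => (X ω, Y ω)) t)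
      ≤ 0 := by
    apply gibbs
    · exact fun t _ => prob_nonneg hμ0 _ t
    · exact fun t _ => mul_nonneg (prob_nonneg hμ0 _ _) (prob_nonneg hμ0 _ _)
    · intro t _ hpt
      exact mul_pos (lt_of_lt_of_le hpt (prob_pair_le_fst hμ0 X Y t))
        (lt_of_lt_of_le hpt (prob_pair_le_snd hμ0 X Y t))
    · exact sum_prob_eq_one hμ1 _
    · have hsub : Finset.univ.image (fun ω => (X ω, Y ω)) ⊆
          (Finset.univ.image X) ×ˢ (Finset.univ.image Y) := by
        intro t ht
        obtain ⟨ω, -, rfl⟩ := Finset.mem_image.mp ht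
        exact Finset.mem_product.mpr ⟨Finset.mem_image_of_mem X (Finset.mem_univ ω),
          Finset.mem_image_of_mem Y (Finset.mem_univ ω)⟩
      calc ∑ t ∈ Finset.univ.image (fun ω => (X ω, Y ω)), prob μ X t.1 * prob μ Y t.2
          ≤ ∑ t ∈ (Finset.univ.image X) ×ˢ (Finset.univ.image Y),
              prob μ X t.1 * prob μ Y t.2 := by
            refine Finset.sum_le_sum_of_subset_of_nonneg hsub fun t _ _ =>
              mul_nonneg (prob_nonneg hμ0 _ _) (prob_nonneg hμ0 _ _)
        _ = (∑ a ∈ Finset.univ.image X, prob μ X a) *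
              (∑ b ∈ Finset.univ.image Y, prob μ Y b) := by
            rw [Finset.sum_mul_sum, Finset.sum_product]
        _ ≤ 1 := by rw [sum_prob_eq_one hμ1 X, sum_prob_eq_one hμ1 Y]; norm_num
  have expand : ∑ t ∈ Finset.univ.image (fun ω => (X ω, Y ω)),
      prob μ (fun ω => (X ω, Y ω)) t *
        Real.logb 2 ((prob μ X t.1 * prob μ Y t.2) / prob μ (fun ω => (X ω, Y ω)) t)
      = ∑ t ∈ Finset.univ.image (fun ω => (X ω, Y ω)),
        (prob μ (fun ω => (X ω, Y ω)) t * Real.logb 2 (prob μ X t.1)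
          + prob μ (fun ω => (X ω, Y ω)) t * Real.logb 2 (prob μ Y t.2)
          - prob μ (fun ω => (X ω, Y ω)) t *
              Real.logb 2 (prob μ (fun ω => (X ω, Y ω)) t)) := by
    refine Finset.sum_congr rfl fun t _ => ?_
    rcases eq_or_lt_of_le (prob_nonneg hμ0 (fun ω => (X ω, Y ω)) t) with h0 | h0
    · rw [← h0]; ring
    · have h1 : 0 < prob μ X t.1 := lt_of_lt_of_le h0 (prob_pair_le_fst hμ0 X Y t)
      have h2 : 0 < prob μ Y t.2 := lt_of_lt_of_le h0 (prob_pair_le_snd hμ0 X Y t)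
      rw [Real.logb_div (by positivity) (ne_of_gt h0), Real.logb_mul h1.ne' h2.ne']
      ring
  unfold mutInfo
  rw [hHX, hHY]
  unfold H
  rw [expand] at key
  rw [Finset.sum_sub_distrib, Finset.sum_add_distrib] at key
  linarith

end Paper
namespace Paper
open Finset Real Classical
attribute [local instance 2000] Classical.propDecidable

variable {Ω : Type*} [Fintype Ω] {μ : Ω → ℝ}

lemma condMutInfo_nonneg {α β γ : Type*} (hμ : IsPMF μ)
    (X : Ω → α) (Y : Ω → β) (Z : Ω → γ) : 0 ≤ condMutInfo μ X Y Z := by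
  obtain ⟨hμ0, hμ1⟩ := hμ
  set T : Ω → α × β × γ := fun ω => (X ω, Y ω, Z ω) with hTdef
  have hTXZ : ∀ t : α × β × γ, prob μ T t ≤ prob μ (fun ω => (X ω, Z ω)) (t.1, t.2.2) :=
    fun t => pe_mono hμ0 (fun ω h => by rw [← h])
  have hTYZ : ∀ t : α × β × γ, prob μ T t ≤ prob μ (fun ω => (Y ω, Z ω)) t.2 :=
    fun t => pe_mono hμ0 (fun ω h => by rw [← h])
  have hTZ : ∀ t : α × β × γ, prob μ T t ≤ prob μ Z t.2.2 :=
    fun t => pe_mono hμ0 (fun ω h => by rw [← h])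
  have hXZZ : ∀ x z, prob μ (fun ω => (X ω, Z ω)) (x, z) ≤ prob μ Z z :=
    fun x z => pe_mono hμ0 (fun ω h => congrArg Prod.snd h)
  set s := Finset.univ.image T with hs
  set q : α × β × γ → ℝ := fun t =>
    prob μ (fun ω => (X ω, Z ω)) (t.1, t.2.2) * prob μ (fun ω => (Y ω, Z ω)) t.2
      / prob μ Z t.2.2 with hqdef
  have hH1 : H μ (fun ω => (X ω, Z ω)) = -∑ t ∈ s, prob μ T t *
      Real.logb 2 (prob μ (fun ω => (X ω, Z ω)) (t.1, t.2.2)) := by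
    rw [H_pointwise]
    congr 1
    simpa using sum_mul_comp (μ := μ) T
      (fun t => Real.logb 2 (prob μ (fun ω => (X ω, Z ω)) (t.1, t.2.2)))
  have hH2 : H μ (fun ω => (Y ω, Z ω)) = -∑ t ∈ s, prob μ T t *
      Real.logb 2 (prob μ (fun ω => (Y ω, Z ω)) t.2) := by
    rw [H_pointwise]
    congr 1
    simpa using sum_mul_comp (μ := μ) T
      (fun t => Real.logb 2 (prob μ (fun ω => (Y ω, Z ω)) t.2))
  have hH4 : H μ Z = -∑ t ∈ s, prob μ T t * Real.logb 2 (prob μ Z t.2.2) := by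
    rw [H_pointwise]
    congr 1
    simpa using sum_mul_comp (μ := μ) T (fun t => Real.logb 2 (prob μ Z t.2.2))
  have key : ∑ t ∈ s, prob μ T t * Real.logb 2 (q t / prob μ T t) ≤ 0 := by
    apply gibbs
    · exact fun t _ => prob_nonneg hμ0 _ t
    · exact fun t _ => div_nonneg (mul_nonneg (prob_nonneg hμ0 _ _) (prob_nonneg hμ0 _ _))
        (prob_nonneg hμ0 _ _)
    · intro t _ hpt
      have h1 := lt_of_lt_of_le hpt (hTXZ t)
      have h2 := lt_of_lt_of_le hpt (hTYZ t)
      have h3 := lt_of_lt_of_le hpt (hTZ t)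
      exact div_pos (mul_pos h1 h2) h3
    · exact sum_prob_eq_one hμ1 _
    · -- ∑ q over s ≤ 1
      have hsub : s ⊆ (Finset.univ.image X) ×ˢ ((Finset.univ.image Y) ×ˢ (Finset.univ.image Z)) := by
        intro t ht
        obtain ⟨ω, -, rfl⟩ := Finset.mem_image.mp ht
        exact Finset.mem_product.mpr ⟨Finset.mem_image_of_mem X (Finset.mem_univ ω),
          Finset.mem_product.mpr ⟨Finset.mem_image_of_mem Y (Finset.mem_univ ω),
            Finset.mem_image_of_mem Z (Finset.mem_univ ω)⟩⟩
      have hstep : ∑ t ∈ (Finset.univ.image X) ×ˢ ((Finset.univ.image Y) ×ˢ (Finset.univ.image Z)),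
          q t = 1 := by
        rw [Finset.sum_product]
        have hx : ∀ x, ∑ u ∈ (Finset.univ.image Y) ×ˢ (Finset.univ.image Z), q (x, u)
            = ∑ z ∈ Finset.univ.image Z, prob μ (fun ω => (X ω, Z ω)) (x, z) := by
          intro x
          rw [Finset.sum_product]
          rw [Finset.sum_comm]
          refine Finset.sum_congr rfl fun z hz => ?_
          have hrow : ∀ y, q (x, (y, z)) =
              (prob μ (fun ω => (X ω, Z ω)) (x, z) / prob μ Z z) *
                prob μ (fun ω => (Y ω, Z ω)) (y, z) := by
            intro y; simp only [hqdef]; ring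
          rw [Finset.sum_congr rfl fun y _ => hrow y, ← Finset.mul_sum,
            prob_fst_marginal Y Z z]
          rcases eq_or_lt_of_le (prob_nonneg hμ0 Z z) with h0 | h0
          · have : prob μ (fun ω => (X ω, Z ω)) (x, z) = 0 :=
              le_antisymm ((hXZZ x z).trans h0.ge) (prob_nonneg hμ0 _ _)
            rw [this, ← h0]; simp
          · exact div_mul_cancel₀ _ h0.ne'
        rw [Finset.sum_congr rfl fun x _ => hx x, Finset.sum_comm]
        rw [Finset.sum_congr rfl fun z _ => prob_fst_marginal X Z z]
        exact sum_prob_eq_one hμ1 Z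
      calc ∑ t ∈ s, q t
          ≤ ∑ t ∈ (Finset.univ.image X) ×ˢ ((Finset.univ.image Y) ×ˢ (Finset.univ.image Z)), q t :=
            Finset.sum_le_sum_of_subset_of_nonneg hsub fun t _ _ =>
              div_nonneg (mul_nonneg (prob_nonneg hμ0 _ _) (prob_nonneg hμ0 _ _))
                (prob_nonneg hμ0 _ _)
        _ ≤ 1 := le_of_eq hstep
  have expand : ∑ t ∈ s, prob μ T t * Real.logb 2 (q t / prob μ T t)
      = ∑ t ∈ s, (prob μ T t * Real.logb 2 (prob μ (fun ω => (X ω, Z ω)) (t.1, t.2.2))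
          + prob μ T t * Real.logb 2 (prob μ (fun ω => (Y ω, Z ω)) t.2)
          - prob μ T t * Real.logb 2 (prob μ Z t.2.2)
          - prob μ T t * Real.logb 2 (prob μ T t)) := by
    refine Finset.sum_congr rfl fun t _ => ?_
    rcases eq_or_lt_of_le (prob_nonneg hμ0 T t) with h0 | h0
    · rw [← h0]; ring
    · have h1 := lt_of_lt_of_le h0 (hTXZ t)
      have h2 := lt_of_lt_of_le h0 (hTYZ t)
      have h3 := lt_of_lt_of_le h0 (hTZ t)
      rw [hqdef]
      rw [Real.logb_div (by positivity) (ne_of_gt h0),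
        Real.logb_div (by positivity) (ne_of_gt h3),
        Real.logb_mul (ne_of_gt h1) (ne_of_gt h2)]
      ring
  unfold condMutInfo
  rw [hH1, hH2, hH4]
  have hH3 : H μ (fun ω => (X ω, Y ω, Z ω)) =
      -∑ t ∈ s, prob μ T t * Real.logb 2 (prob μ T t) := by
    rw [hTdef, H]
  rw [hH3]
  rw [expand] at key
  rw [Finset.sum_sub_distrib, Finset.sum_sub_distrib, Finset.sum_add_distrib] at key
  linarith

end Paper
namespace Paper
open Finset Real Classical
attribute [local instance 2000] Classical.propDecidable

variable {Ω : Type*} [Fintype Ω] {μ : Ω → ℝ}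

lemma H_snd_le_H_pair {α β : Type*} (hμ : IsPMF μ) (X : Ω → α) (Y : Ω → β) :
    H μ Y ≤ H μ (fun ω => (X ω, Y ω)) := by
  obtain ⟨hμ0, hμ1⟩ := hμ
  rw [H_pointwise Y, H_pointwise (fun ω => (X ω, Y ω))]
  apply neg_le_neg
  refine Finset.sum_le_sum fun ω _ => ?_
  rcases eq_or_lt_of_le (hμ0 ω) with h0 | h0
  · rw [← h0]; simp
  · have hp : 0 < prob μ (fun ω' => (X ω', Y ω')) (X ω, Y ω) :=
      lt_of_lt_of_le h0 (le_prob hμ0 _ ω)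
    have hle : prob μ (fun ω' => (X ω', Y ω')) (X ω, Y ω) ≤ prob μ Y (Y ω) :=
      prob_pair_le_snd hμ0 X Y (X ω, Y ω)
    exact mul_le_mul_of_nonneg_left
      (Real.logb_le_logb_of_le one_lt_two hp hle) (hμ0 ω)

lemma H_bool_le_one (hμ : IsPMF μ) (Z : Ω → Bool) : H μ Z ≤ 1 := by
  obtain ⟨hμ0, hμ1⟩ := hμ
  have hq1 : ∑ b ∈ Finset.univ.image Z, ((1:ℝ)/2) ≤ 1 := by
    rw [Finset.sum_const]
    have hcard : (Finset.univ.image Z).card ≤ 2 :=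
      le_trans (Finset.card_le_univ _) (by simp)
    have : ((Finset.univ.image Z).card : ℝ) ≤ 2 := by exact_mod_cast hcard
    rw [nsmul_eq_mul]
    linarith
  have key := gibbs (Finset.univ.image Z) (prob μ Z) (fun _ => (1:ℝ)/2)
    (fun b _ => prob_nonneg hμ0 Z b) (fun b _ => by norm_num)
    (fun b _ _ => by norm_num) (sum_prob_eq_one hμ1 Z) hq1
  have hhalf : Real.logb 2 ((1:ℝ)/2) = -1 := by
    rw [one_div, Real.logb_inv, Real.logb_self_eq_one (by norm_num)]
  have expand : ∑ b ∈ Finset.univ.image Z, prob μ Z b * Real.logb 2 ((1/2) / prob μ Z b)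
      = ∑ b ∈ Finset.univ.image Z,
          (prob μ Z b * (-1) - prob μ Z b * Real.logb 2 (prob μ Z b)) := by
    refine Finset.sum_congr rfl fun b _ => ?_
    rcases eq_or_lt_of_le (prob_nonneg hμ0 Z b) with h0 | h0
    · rw [← h0]; ring
    · rw [Real.logb_div (by norm_num) (ne_of_gt h0), hhalf]
      ring
  rw [expand, Finset.sum_sub_distrib, ← Finset.sum_mul, sum_prob_eq_one hμ1 Z] at key
  unfold H
  linarith

lemma H_pair_of_indep {α β : Type*} (hμ : IsPMF μ) (X : Ω → α) (Y : Ω → β)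
    (hind : ∀ x y, prob μ (fun ω => (X ω, Y ω)) (x, y) = prob μ X x * prob μ Y y) :
    H μ (fun ω => (X ω, Y ω)) = H μ X + H μ Y := by
  obtain ⟨hμ0, hμ1⟩ := hμ
  rw [H_pointwise (fun ω => (X ω, Y ω)), H_pointwise X, H_pointwise Y,
    ← neg_add, ← Finset.sum_add_distrib]
  congr 1
  refine Finset.sum_congr rfl fun ω _ => ?_
  rcases eq_or_lt_of_le (hμ0 ω) with h0 | h0
  · rw [← h0]; ring
  · have h1 : 0 < prob μ X (X ω) := lt_of_lt_of_le h0 (le_prob hμ0 X ω)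
    have h2 : 0 < prob μ Y (Y ω) := lt_of_lt_of_le h0 (le_prob hμ0 Y ω)
    rw [hind (X ω) (Y ω), Real.logb_mul (ne_of_gt h1) (ne_of_gt h2)]
    ring

end Paper


namespace Paper
open Finset Real Classical
attribute [local instance 2000] Classical.propDecidable


/-- if `X ⟂ Y`, `Z` is binary, and `(X,Z) - Q - (Y,Z)` is a Markov
chain, then `I(X,Z;Q|Y,Z) + I(Y,Z;Q|X,Z) ≥ I(X,Y;Q) - 2`. -/
theorem tension_terms_ge_mutInfo_sub_two {Ω 𝒳 𝒴 𝒬 : Type} [Fintype Ω]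
    (μ : Ω → ℝ) (hμ : IsPMF μ)
    (X : Ω → 𝒳) (Y : Ω → 𝒴) (Z : Ω → Bool) (Q : Ω → 𝒬)
    (hind : ∀ x y, prob μ (fun ω => (X ω, Y ω)) (x, y) = prob μ X x * prob μ Y y)
    (hMarkov : condMutInfo μ (fun ω => (X ω, Z ω)) (fun ω => (Y ω, Z ω)) Q = 0) :
    condMutInfo μ (fun ω => (X ω, Z ω)) Q (fun ω => (Y ω, Z ω))
      + condMutInfo μ (fun ω => (Y ω, Z ω)) Q (fun ω => (X ω, Z ω))
      ≥ mutInfo μ (fun ω => (X ω, Y ω)) Q - 2 := by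
  have r1 : H μ (fun ω => ((X ω, Z ω), (Y ω, Z ω))) = H μ (fun ω => (X ω, (Y ω, Z ω))) :=
    H_congr (fun ω ω' => by simp only [Prod.mk.injEq]; tauto)
  have r2 : H μ (fun ω => ((X ω, Z ω), (Q ω, (Y ω, Z ω))))
      = H μ (fun ω => (X ω, (Y ω, (Z ω, Q ω)))) :=
    H_congr (fun ω ω' => by simp only [Prod.mk.injEq]; tauto)
  have r3 : H μ (fun ω => ((Y ω, Z ω), (X ω, Z ω))) = H μ (fun ω => (X ω, (Y ω, Z ω))) :=
    H_congr (fun ω ω' => by simp only [Prod.mk.injEq]; tauto)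
  have r4 : H μ (fun ω => ((Y ω, Z ω), (Q ω, (X ω, Z ω))))
      = H μ (fun ω => (X ω, (Y ω, (Z ω, Q ω)))) :=
    H_congr (fun ω ω' => by simp only [Prod.mk.injEq]; tauto)
  have r5 : H μ (fun ω => (Q ω, (Y ω, Z ω))) = H μ (fun ω => (Y ω, (Z ω, Q ω))) :=
    H_congr (fun ω ω' => by simp only [Prod.mk.injEq]; tauto)
  have r6 : H μ (fun ω => (Q ω, (X ω, Z ω))) = H μ (fun ω => (X ω, (Z ω, Q ω))) :=
    H_congr (fun ω ω' => by simp only [Prod.mk.injEq]; tauto)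
  have r7 : H μ (fun ω => ((X ω, Y ω), Q ω)) = H μ (fun ω => (X ω, (Y ω, Q ω))) :=
    H_congr (fun ω ω' => by simp only [Prod.mk.injEq]; tauto)
  have r8 : H μ (fun ω => (Z ω, (Y ω, Q ω))) = H μ (fun ω => (Y ω, (Z ω, Q ω))) :=
    H_congr (fun ω ω' => by simp only [Prod.mk.injEq]; tauto)
  have r9 : H μ (fun ω => (X ω, (Z ω, (Y ω, Q ω))))
      = H μ (fun ω => (X ω, (Y ω, (Z ω, Q ω)))) :=
    H_congr (fun ω ω' => by simp only [Prod.mk.injEq]; tauto)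
  have r10 : H μ (fun ω => (Z ω, (X ω, Q ω))) = H μ (fun ω => (X ω, (Z ω, Q ω))) :=
    H_congr (fun ω ω' => by simp only [Prod.mk.injEq]; tauto)
  have r11 : H μ (fun ω => (Y ω, (X ω, Q ω))) = H μ (fun ω => (X ω, (Y ω, Q ω))) :=
    H_congr (fun ω ω' => by simp only [Prod.mk.injEq]; tauto)
  have r12 : H μ (fun ω => (Y ω, (Z ω, (X ω, Q ω))))
      = H μ (fun ω => (X ω, (Y ω, (Z ω, Q ω)))) :=
    H_congr (fun ω ω' => by simp only [Prod.mk.injEq]; tauto)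
  have r13 : H μ (fun ω => (Z ω, (X ω, Y ω))) = H μ (fun ω => (X ω, (Y ω, Z ω))) :=
    H_congr (fun ω ω' => by simp only [Prod.mk.injEq]; tauto)
  have A := condMutInfo_nonneg hμ X Z (fun ω => (Y ω, Q ω))
  have B := condMutInfo_nonneg hμ X Y Q
  have D := condMutInfo_nonneg hμ Y Z (fun ω => (X ω, Q ω))
  have CYZ := mutInfo_nonneg hμ Y Z
  have EXZ := mutInfo_nonneg hμ X Z
  have CXY := H_snd_le_H_pair hμ Z (fun ω => (X ω, Y ω))
  have hZ1 := H_bool_le_one hμ Z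
  have F := H_pair_of_indep hμ X Y hind
  simp only [condMutInfo, mutInfo] at A B D CYZ EXZ ⊢
  rw [r8, r9] at A
  rw [r10, r11, r12] at D
  rw [r13] at CXY
  rw [r1, r2, r3, r4, r5, r6, r7]
  linarith

end Paper
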